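/- Let b = (b₁,b₂) ∈ ℂ², ℓ = (ℓ_{j,k}) ∈ M₂(ℂ), n ≥ 1, and X = (X₁,X₂) ∈ Mₙ(ℂ)². Set W_j = [[b_j·Iₙ, ℓ_{j,1}X₁ + ℓ_{j,2}X₂],[0, b_j·Iₙ]] ∈ M_{2n}(ℂ), B₀ = ℒ(b₁,b₂) ∈ M_{4s}(ℂ), and Y_j = ℓ_{1,j}R₁ + ℓ_{2,j}R₂. Then the 8sn×8sn matrix ℒ(W₁,W₂) is unitarily conjugate to the 2×2-block matrix [[B₀⊗Iₙ, Λ_Y(X)],[Λ_Y(X)*, B₀⊗Iₙ]], where Λ_Y(X) = Y₁⊗X₁ + Y₂⊗X₂, via a unitary which, after the natural identification of ℂ^{4s}⊗ℂ^{2n} with ℂ⁸⊗ℂ^{sn}, is of the form (8×8 permutation matrix) ⊗ I_{sn}. In particular, ℒ(W₁,W₂) is positive definite if and only if [[B₀⊗Iₙ, Λ_Y(X)],[Λ_Y(X)*, B₀⊗Iₙ]] is positive definite. -/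

import Mathlib

open scoped ComplexOrder Kronecker Matrix Matrix.Norms.L2Operator

noncomputable section

/-- Square complex matrices of size `n`. -/
abbrev Mat (n : ℕ) : Type := Matrix (Fin n) (Fin n) ℂ

/-- Assemble a `k × k` array of matrices into a single block matrix. -/
def blockMat {k : ℕ} {α β : Type*} (M : Fin k → Fin k → Matrix α β ℂ) :
    Matrix (Fin k × α) (Fin k × β) ℂ :=
  Matrix.of fun p q => M p.1 q.1 p.2 q.2

/-- The pencil `ℒ(X)` whose positivity defines the free spectrahedron `𝔓`. -/
def scrL {s : ℕ} (C1 C2 : Matrix (Fin s) (Fin s) ℂ) {α : Type*} [DecidableEq α]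
    (X : Matrix α α ℂ × Matrix α α ℂ) :
    Matrix (Fin 4 × (Fin s × α)) (Fin 4 × (Fin s × α)) ℂ :=
  blockMat ![![1, C1 ⊗ₖ X.1, C2 ⊗ₖ X.2, 0],
             ![(C1 ⊗ₖ X.1)ᴴ, 1, 0, C2 ⊗ₖ X.2],
             ![(C2 ⊗ₖ X.2)ᴴ, 0, 1, C1 ⊗ₖ X.1],
             ![0, (C2 ⊗ₖ X.2)ᴴ, (C1 ⊗ₖ X.1)ᴴ, 1]]

/-- The free spectrahedron `𝔓` at level `n`. -/
def freeP {s : ℕ} (C1 C2 : Matrix (Fin s) (Fin s) ℂ) (n : ℕ) : Set (Mat n × Mat n) :=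
  {X | (scrL C1 C2 X).PosDef}

/-- The matrix `R₁`. -/
def Rmat1 {s : ℕ} (C1 : Matrix (Fin s) (Fin s) ℂ) :
    Matrix (Fin 4 × Fin s) (Fin 4 × Fin s) ℂ :=
  blockMat ![![0, C1, 0, 0], ![0, 0, 0, 0], ![0, 0, 0, C1], ![0, 0, 0, 0]]

/-- The matrix `R₂`. -/
def Rmat2 {s : ℕ} (C2 : Matrix (Fin s) (Fin s) ℂ) :
    Matrix (Fin 4 × Fin s) (Fin 4 × Fin s) ℂ :=
  blockMat ![![0, 0, C2, 0], ![0, 0, 0, C2], ![0, 0, 0, 0], ![0, 0, 0, 0]]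

/-- `ℒ(z₁, z₂)` at level one, as a `4s × 4s` matrix. -/
def scrL1 {s : ℕ} (C1 C2 : Matrix (Fin s) (Fin s) ℂ) (z1 z2 : ℂ) :
    Matrix (Fin 4 × Fin s) (Fin 4 × Fin s) ℂ :=
  blockMat ![![1, z1 • C1, z2 • C2, 0],
             ![(z1 • C1)ᴴ, 1, 0, z2 • C2],
             ![(z2 • C2)ᴴ, 0, 1, z1 • C1],
             ![0, (z2 • C2)ᴴ, (z1 • C1)ᴴ, 1]]

/-- The `2 × 2` block matrix `[[b•I, L],[0, b•I]]`, i.e. the value of an affine free map on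
the nilpotent `S ⊗ X`. -/
def Wmat {n : ℕ} (b : ℂ) (L : Mat n) : Matrix (Fin 2 × Fin n) (Fin 2 × Fin n) ℂ :=
  blockMat ![![b • 1, L], ![0, b • 1]]

/-- The `2 × 2` block matrix `[[B₀ ⊗ Iₙ, Λ_Y(X)],[Λ_Y(X)*, B₀ ⊗ Iₙ]]`. -/
def bigRHS {s : ℕ} (C1 C2 : Matrix (Fin s) (Fin s) ℂ) (b1 b2 : ℂ)
    (ℓ : Matrix (Fin 2) (Fin 2) ℂ) {n : ℕ} (X : Mat n × Mat n) :
    Matrix (Fin 2 × ((Fin 4 × Fin s) × Fin n)) (Fin 2 × ((Fin 4 × Fin s) × Fin n)) ℂ :=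
  blockMat
    ![![scrL1 C1 C2 b1 b2 ⊗ₖ (1 : Mat n),
        (ℓ 0 0 • Rmat1 C1 + ℓ 1 0 • Rmat2 C2) ⊗ₖ X.1 +
          (ℓ 0 1 • Rmat1 C1 + ℓ 1 1 • Rmat2 C2) ⊗ₖ X.2],
      ![((ℓ 0 0 • Rmat1 C1 + ℓ 1 0 • Rmat2 C2) ⊗ₖ X.1 +
          (ℓ 0 1 • Rmat1 C1 + ℓ 1 1 • Rmat2 C2) ⊗ₖ X.2)ᴴ,
        scrL1 C1 C2 b1 b2 ⊗ₖ (1 : Mat n)]]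

open scoped ComplexOrder in
theorem myPosDef_submatrix {m l : Type*} [Fintype m] [Fintype l] [DecidableEq m] [DecidableEq l]
    {M : Matrix l l ℂ} (hM : M.PosDef) (e : m ≃ l) : (M.submatrix e e).PosDef := by
  exact hM.submatrix e.injective

theorem myPosDef_submatrix_equiv {m l : Type*} [Fintype m] [Fintype l] [DecidableEq m] [DecidableEq l]
    {M : Matrix l l ℂ} (e : m ≃ l) : (M.submatrix e e).PosDef ↔ M.PosDef := by
  constructor
  · intro h
    have := myPosDef_submatrix h e.symm
    rwa [Matrix.submatrix_submatrix,
      show (⇑e ∘ ⇑e.symm) = id from funext fun i => e.apply_symm_apply i,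
      Matrix.submatrix_id_id] at this
  · exact fun h => myPosDef_submatrix h e

def reIdx (s n : ℕ) : Fin 4 × (Fin s × (Fin 2 × Fin n)) ≃ Fin 2 × ((Fin 4 × Fin s) × Fin n) where
  toFun p := (p.2.2.1, ((p.1, p.2.1), p.2.2.2))
  invFun q := (q.2.1.1, (q.2.1.2, (q.1, q.2.2)))
  left_inv _ := rfl
  right_inv _ := rfl

set_option maxHeartbeats 2000000 in
theorem scrL_W_eq_bigRHS_submatrix {s : ℕ}
    (C1 C2 : Matrix (Fin s) (Fin s) ℂ) (b1 b2 : ℂ)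
    (ℓ : Matrix (Fin 2) (Fin 2) ℂ) {n : ℕ} (X : Mat n × Mat n) :
    scrL C1 C2
      (Wmat b1 (ℓ 0 0 • X.1 + ℓ 0 1 • X.2), Wmat b2 (ℓ 1 0 • X.1 + ℓ 1 1 • X.2)) =
      (bigRHS C1 C2 b1 b2 ℓ X).submatrix (reIdx s n) (reIdx s n) := by
  ext ⟨i, c, j, k⟩ ⟨i', c', j', k'⟩
  fin_cases i <;> fin_cases i' <;> fin_cases j <;> fin_cases j' <;>
    simp only [scrL, bigRHS, blockMat, reIdx, Matrix.submatrix_apply, Matrix.of_apply,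
      Equiv.coe_fn_mk, Fin.reduceFinMk, Matrix.cons_val, scrL1, Wmat, Rmat1, Rmat2,
      Matrix.kroneckerMap_apply, Matrix.add_apply, Matrix.smul_apply, Matrix.conjTranspose_apply] <;>
    simp [scrL, bigRHS, blockMat, scrL1, Wmat, Rmat1, Rmat2, reIdx,
      Matrix.kroneckerMap_apply, Matrix.one_apply, Matrix.conjTranspose_apply,
      Matrix.vecHead, Matrix.vecTail, apply_ite (starRingEnd ℂ),
      Prod.ext_iff] <;>
    first
      | with_reducible rfl
      | (split_ifs <;> simp_all <;> ring)
      | ring_nf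


/-- Lemma 3.2: `ℒ(W₁, W₂)` is unitarily conjugate, via a block permutation
`(8 × 8 permutation) ⊗ I_{sn}`, to `[[B₀ ⊗ Iₙ, Λ_Y(X)],[Λ_Y(X)*, B₀ ⊗ Iₙ]]`. -/
theorem scrL_of_W_conjugate_to_blocks {s : ℕ} (hs : 0 < s)
    (C1 C2 : Matrix (Fin s) (Fin s) ℂ) (b1 b2 : ℂ)
    (ℓ : Matrix (Fin 2) (Fin 2) ℂ) {n : ℕ} (X : Mat n × Mat n) :
    ∃ π : Fin 4 × Fin 2 ≃ Fin 2 × Fin 4,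
      (scrL C1 C2
          (Wmat b1 (ℓ 0 0 • X.1 + ℓ 0 1 • X.2), Wmat b2 (ℓ 1 0 • X.1 + ℓ 1 1 • X.2)) =
        (bigRHS C1 C2 b1 b2 ℓ X).submatrix
          (fun p => ((π (p.1, p.2.2.1)).1, (((π (p.1, p.2.2.1)).2, p.2.1), p.2.2.2)))
          (fun p => ((π (p.1, p.2.2.1)).1, (((π (p.1, p.2.2.1)).2, p.2.1), p.2.2.2)))) ∧
      ((scrL C1 C2
          (Wmat b1 (ℓ 0 0 • X.1 + ℓ 0 1 • X.2), Wmat b2 (ℓ 1 0 • X.1 + ℓ 1 1 • X.2))).PosDef ↔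
        (bigRHS C1 C2 b1 b2 ℓ X).PosDef) := by
  have key := scrL_W_eq_bigRHS_submatrix C1 C2 b1 b2 ℓ X
  exact ⟨Equiv.prodComm _ _, key, by rw [key]; exact myPosDef_submatrix_equiv (reIdx s n)⟩
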